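/- Let a_1,…,a_p and b_1,…,b_q be positive integers with a_1 ≤ a_2 ≤ ⋯ ≤ a_p, b_1 ≥ b_2 ≥ ⋯ ≥ b_q, 1 ≤ p ≤ q, and a_1+⋯+a_p = b_1+⋯+b_q = d. Set m = p+q−2. If m > 0 and m < d / gcd(a_1,…,a_p,b_1,…,b_q), then a_p > b_q. -/

import Mathlib

/-- Lemma 2.6, under the Order Assumption (OA). -/
theorem lemma_ap_gt_bq (d p q : ℕ)
    (a : Fin p → ℕ) (b : Fin q → ℕ)
    (ha : ∀ i, 0 < a i) (hb : ∀ j, 0 < b j)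
    (hamono : Monotone a) (hbanti : Antitone b)
    (hp : 1 ≤ p) (hpq : p ≤ q)
    (hsa : ∑ i, a i = d) (hsb : ∑ j, b j = d)
    (hm : 0 < p + q - 2)
    (hdeg : p + q - 2 < d / Nat.gcd (Finset.univ.gcd a) (Finset.univ.gcd b)) :
    b ⟨q - 1, by omega⟩ < a ⟨p - 1, by omega⟩ := by
  by_contra hcon
  push_neg at hcon
  set ip : Fin p := ⟨p - 1, by omega⟩
  set jq : Fin q := ⟨q - 1, by omega⟩
  have hq : 1 ≤ q := le_trans hp hpq
  have hale : ∀ i : Fin p, a i ≤ a ip := fun i =>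
    hamono (show i ≤ ip by have := i.isLt; exact Fin.mk_le_of_le_val (by show (i : ℕ) ≤ p - 1; omega))
  have hble : ∀ j : Fin q, b jq ≤ b j := fun j =>
    hbanti (show j ≤ jq by have := j.isLt; exact Fin.mk_le_of_le_val (by show (j : ℕ) ≤ q - 1; omega))
  -- d ≤ p * a ip
  have hd1 : d ≤ p * a ip := by
    calc d = ∑ i : Fin p, a i := hsa.symm
    _ ≤ ∑ _i : Fin p, a ip := Finset.sum_le_sum fun i _ => hale i
    _ = p * a ip := by simp [Finset.sum_const, mul_comm]
  have hd2 : q * b jq ≤ d := by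
    calc q * b jq = ∑ _j : Fin q, b jq := by simp [Finset.sum_const, mul_comm]
    _ ≤ ∑ j : Fin q, b j := Finset.sum_le_sum fun j _ => hble j
    _ = d := hsb
  have hap : 0 < a ip := ha ip
  have hqa : q * a ip ≤ d := le_trans (Nat.mul_le_mul_left q hcon) hd2
  have hpqe : p = q := le_antisymm hpq
    (Nat.le_of_mul_le_mul_right (le_trans hqa hd1) hap)
  subst hpqe
  have hde : d = p * a ip := le_antisymm hd1 hqa
  -- all a i equal a ip
  have haeq : ∀ i : Fin p, a i = a ip := by
    have hsum : ∑ i : Fin p, a i = ∑ _i : Fin p, a ip := by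
      rw [hsa]; simp [Finset.sum_const, mul_comm, hde]
    have := (Finset.sum_eq_sum_iff_of_le (fun i _ => hale i)).mp hsum
    exact fun i => this i (Finset.mem_univ i)
  have hbeq : ∀ j : Fin p, b j = a ip := by
    have hsum : ∑ _j : Fin p, a ip = ∑ j : Fin p, b j := by
      rw [hsb]; simp [Finset.sum_const, mul_comm]; omega
    have h2 : ∀ j ∈ Finset.univ, a ip ≤ b j := fun j _ =>
      le_trans hcon (hble j)
    have := (Finset.sum_eq_sum_iff_of_le h2).mp hsum
    exact fun j => (this j (Finset.mem_univ j)).symm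
  have hga : Finset.univ.gcd a = a ip := by
    apply Nat.dvd_antisymm
    · exact Finset.gcd_dvd (Finset.mem_univ ip)
    · exact Finset.dvd_gcd fun i _ => (haeq i) ▸ dvd_rfl
  have hgb : Finset.univ.gcd b = a ip := by
    apply Nat.dvd_antisymm
    · exact (hbeq jq) ▸ Finset.gcd_dvd (Finset.mem_univ jq)
    · exact Finset.dvd_gcd fun j _ => (hbeq j) ▸ dvd_rfl
  rw [hga, hgb, Nat.gcd_self, hde, Nat.mul_div_cancel _ hap] at hdeg
  omega
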